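/- Consider the tree–grass ODE system G' = r_G·G − μ_G·G² − γ_TG·T·G and T' = r_T·T − μ_T·T², where r_G = γ_G − δ_G0 > 0 and r_T = γ_T − δ_T > 0, and set X_G = r_G/μ_G and Y_T = r_T/μ_T. If G, T : [0,∞) → ℝ are differentiable, satisfy these two equations for all t ≥ 0, and satisfy 0 ≤ G(0) ≤ X_G and 0 ≤ T(0) ≤ Y_T, then 0 ≤ G(t) ≤ X_G and 0 ≤ T(t) ≤ Y_T for all t ≥ 0; that is, the box B = [0, X_G] × [0, Y_T] is positively invariant for the flow between fire pulses. -/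

import Mathlib

open Set Filter Real Topology

/-- One-sided Grönwall-type invariance lemma: if `y a ≤ 0` and whenever `y ≥ 0`
its derivative is at most `K * y`, then `y ≤ 0` on `[a, b]`. -/
lemma nonpos_of_deriv_cond {y y' : ℝ → ℝ} {a b K : ℝ}
    (hd : ∀ t ∈ Set.Icc a b, HasDerivAt y (y' t) t)
    (h0 : y a ≤ 0)
    (hb : ∀ t ∈ Set.Icc a b, 0 ≤ y t → y' t ≤ K * y t) :
    ∀ t ∈ Set.Icc a b, y t ≤ 0 := by
  intro t1 ht1
  by_contra hpos
  push_neg at hpos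
  have hab : a ≤ b := ht1.1.trans ht1.2
  have hcont : ContinuousOn y (Icc a b) := fun x hx =>
    (hd x hx).continuousAt.continuousWithinAt
  -- the set where y ≤ 0 before t1
  set S : Set ℝ := {s | s ∈ Icc a t1 ∧ y s ≤ 0} with hS
  have hane : a ∈ S := ⟨⟨le_refl a, ht1.1⟩, h0⟩
  have hSsub : S ⊆ Icc a t1 := fun x hx => hx.1
  have hIccsub : Icc a t1 ⊆ Icc a b := Icc_subset_Icc le_rfl ht1.2
  have hScl : IsClosed S := by
    have hSeq : S = Icc a t1 ∩ y ⁻¹' (Iic 0) := rfl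
    rw [hSeq]
    exact (hcont.mono hIccsub).preimage_isClosed_of_isClosed isClosed_Icc isClosed_Iic
  have hScomp : IsCompact S := (isCompact_Icc.of_isClosed_subset hScl hSsub)
  have hsne : S.Nonempty := ⟨a, hane⟩
  set s := sSup S with hs
  have hsmem : s ∈ S := hScomp.sSup_mem hsne
  have hst1 : s ≤ t1 := hsmem.1.2
  have hsa : a ≤ s := hsmem.1.1
  have hslt : s < t1 := by
    rcases lt_or_eq_of_le hst1 with h | h
    · exact h
    · exact absurd (h ▸ hsmem.2) (not_le.mpr hpos)
  -- y > 0 strictly after s, up to t1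
  have hypos : ∀ u, u ∈ Ioc s t1 → 0 < y u := by
    intro u hu
    by_contra hle
    push_neg at hle
    have : u ∈ S := ⟨⟨hsa.trans hu.1.le, hu.2⟩, hle⟩
    have hbdd : BddAbove S := (bddAbove_Icc (a := a) (b := t1)).mono hSsub
    exact absurd (le_csSup hbdd this) (not_le.mpr hu.1)
  -- hence y s = 0 by continuity from the right
  have hys0 : y s = 0 := by
    have h1 : (0:ℝ) ≤ y s := by
      have htend : Tendsto y (𝓝[>] s) (𝓝 (y s)) :=
        ((hd s (hIccsub hsmem.1)).continuousAt.continuousWithinAt).tendsto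
      refine ge_of_tendsto htend ?_
      filter_upwards [Ioc_mem_nhdsGT hslt] with u hu
      exact (hypos u hu).le
    exact le_antisymm hsmem.2 h1
  have hynn : ∀ u ∈ Icc s t1, 0 ≤ y u := by
    intro u hu
    rcases eq_or_lt_of_le hu.1 with h | h
    · rw [← h, hys0]
    · exact (hypos u ⟨h, hu.2⟩).le
  -- apply Grönwall on [s, t1] with δ = ε = 0
  have hIcc2 : Icc s t1 ⊆ Icc a b := Icc_subset_Icc hsa (ht1.2)
  have key := le_gronwallBound_of_liminf_deriv_right_le (f := y) (f' := y')
    (δ := 0) (K := K) (ε := 0) (a := s) (b := t1)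
    (hcont.mono hIcc2)
    (fun x hx r hr =>
      ((hd x (hIcc2 (Ico_subset_Icc_self hx))).hasDerivWithinAt).liminf_right_slope_le hr)
    (le_of_eq hys0)
    (fun x hx => by
      have := hb x (hIcc2 (Ico_subset_Icc_self hx)) (hynn x (Ico_subset_Icc_self hx))
      linarith)
  have := key t1 ⟨hslt.le, le_refl t1⟩
  rw [gronwallBound_ε0_δ0] at this
  exact absurd this (not_le.mpr hpos)

/-- The box `[0, X_G] × [0, Y_T]` is positively invariant for the
tree–grass ODE system between fire pulses. -/
theorem box_positively_invariant
    (γG δG0 γT δT μG μT γTG rG rT XG YT : ℝ)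
    (hδG0 : 0 ≤ δG0) (hδT : 0 ≤ δT)
    (hμG : 0 < μG) (hμT : 0 < μT) (hγTG : 0 ≤ γTG)
    (hrG : rG = γG - δG0) (hrT : rT = γT - δT)
    (hrGpos : 0 < rG) (hrTpos : 0 < rT)
    (hXG : XG = rG / μG) (hYT : YT = rT / μT)
    (G T : ℝ → ℝ)
    (hG : ∀ t ≥ (0:ℝ), HasDerivAt G (rG * G t - μG * (G t) ^ 2 - γTG * T t * G t) t)
    (hT : ∀ t ≥ (0:ℝ), HasDerivAt T (rT * T t - μT * (T t) ^ 2) t)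
    (hG0 : 0 ≤ G 0 ∧ G 0 ≤ XG) (hT0 : 0 ≤ T 0 ∧ T 0 ≤ YT) :
    ∀ t ≥ (0:ℝ), (0 ≤ G t ∧ G t ≤ XG) ∧ (0 ≤ T t ∧ T t ≤ YT) := by
  intro b hb
  have hXGpos : 0 < XG := by rw [hXG]; positivity
  have hYTpos : 0 < YT := by rw [hYT]; positivity
  have hIcc : ∀ t ∈ Icc (0:ℝ) b, (0:ℝ) ≤ t := fun t ht => ht.1
  -- continuity of G and T on [0, b]
  have hTcont : ContinuousOn T (Icc 0 b) := fun x hx =>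
    (hT x hx.1).continuousAt.continuousWithinAt
  have hGcont : ContinuousOn G (Icc 0 b) := fun x hx =>
    (hG x hx.1).continuousAt.continuousWithinAt
  -- bound for the coefficient rT - μT * T
  obtain ⟨K1, hK1⟩ := isCompact_Icc.exists_bound_of_continuousOn
    (f := fun t => rT - μT * T t) (by fun_prop)
  -- T ≥ 0 on [0, b]
  have hTnn : ∀ t ∈ Icc (0:ℝ) b, 0 ≤ T t := by
    intro t ht
    have := nonpos_of_deriv_cond (y := fun u => -T u)
      (y' := fun u => -(rT * T u - μT * (T u) ^ 2)) (a := 0) (b := b) (K := K1)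
      (fun u hu => (hT u hu.1).neg) (by show -T 0 ≤ 0; linarith [hT0.1])
      (fun u hu hy => by
        have h1 := hK1 u hu
        have h2 : T u ≤ 0 := by simpa using hy
        show -(rT * T u - μT * (T u) ^ 2) ≤ K1 * (-T u)
        have : -(rT * T u - μT * (T u) ^ 2) = (rT - μT * T u) * (-T u) := by ring
        rw [this]
        have hnn : (0:ℝ) ≤ -T u := by linarith
        have hle : rT - μT * T u ≤ K1 := (le_abs_self _).trans (by simpa using h1)
        exact mul_le_mul_of_nonneg_right hle hnn)
      t ht
    have h' : -T t ≤ 0 := this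
    linarith
  -- T ≤ YT on [0, b]
  have hTub : ∀ t ∈ Icc (0:ℝ) b, T t ≤ YT := by
    intro t ht
    have := nonpos_of_deriv_cond (y := fun u => T u - YT)
      (y' := fun u => rT * T u - μT * (T u) ^ 2) (a := 0) (b := b) (K := 0)
      (fun u hu => (hT u hu.1).sub_const YT) (by show T 0 - YT ≤ 0; linarith [hT0.2])
      (fun u hu hy => by
        have hy' : 0 ≤ T u - YT := hy
        show rT * T u - μT * (T u) ^ 2 ≤ 0 * (T u - YT)
        have hTu : YT ≤ T u := by linarith
        have h0T : 0 ≤ T u := le_trans hYTpos.le hTu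
        have : rT * T u - μT * (T u) ^ 2 = -μT * T u * (T u - YT) + (rT - μT * YT) * T u := by
          ring
        rw [this]
        have hz : rT - μT * YT = 0 := by
          rw [hYT]; field_simp; ring
        rw [hz, zero_mul, add_zero, zero_mul]
        have : 0 ≤ μT * T u * (T u - YT) := by positivity
        linarith)
      t ht
    have h' : T t - YT ≤ 0 := this
    linarith
  -- G ≥ 0 on [0, b]
  obtain ⟨K2, hK2⟩ := isCompact_Icc.exists_bound_of_continuousOn
    (f := fun t => rG - μG * G t - γTG * T t) (by fun_prop)
  have hGnn : ∀ t ∈ Icc (0:ℝ) b, 0 ≤ G t := by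
    intro t ht
    have := nonpos_of_deriv_cond (y := fun u => -G u)
      (y' := fun u => -(rG * G u - μG * (G u) ^ 2 - γTG * T u * G u)) (a := 0) (b := b)
      (K := K2)
      (fun u hu => (hG u hu.1).neg) (by show -G 0 ≤ 0; linarith [hG0.1])
      (fun u hu hy => by
        have h1 := hK2 u hu
        have h2 : G u ≤ 0 := by simpa using hy
        show -(rG * G u - μG * (G u) ^ 2 - γTG * T u * G u) ≤ K2 * (-G u)
        have : -(rG * G u - μG * (G u) ^ 2 - γTG * T u * G u)
            = (rG - μG * G u - γTG * T u) * (-G u) := by ring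
        rw [this]
        have hnn : (0:ℝ) ≤ -G u := by linarith
        have hle : rG - μG * G u - γTG * T u ≤ K2 := (le_abs_self _).trans (by simpa using h1)
        exact mul_le_mul_of_nonneg_right hle hnn)
      t ht
    have h' : -G t ≤ 0 := this
    linarith
  -- G ≤ XG on [0, b]
  have hGub : ∀ t ∈ Icc (0:ℝ) b, G t ≤ XG := by
    intro t ht
    have := nonpos_of_deriv_cond (y := fun u => G u - XG)
      (y' := fun u => rG * G u - μG * (G u) ^ 2 - γTG * T u * G u) (a := 0) (b := b) (K := 0)
      (fun u hu => (hG u hu.1).sub_const XG) (by show G 0 - XG ≤ 0; linarith [hG0.2])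
      (fun u hu hy => by
        have hy' : 0 ≤ G u - XG := hy
        show rG * G u - μG * (G u) ^ 2 - γTG * T u * G u ≤ 0 * (G u - XG)
        have hGu : XG ≤ G u := by linarith
        have h0G : 0 ≤ G u := le_trans hXGpos.le hGu
        have h0T : 0 ≤ T u := hTnn u hu
        have : rG * G u - μG * (G u) ^ 2 - γTG * T u * G u
            = -μG * G u * (G u - XG) + (rG - μG * XG) * G u - γTG * T u * G u := by ring
        rw [this]
        have hz : rG - μG * XG = 0 := by rw [hXG]; field_simp; ring
        rw [hz, zero_mul, zero_mul]
        have h1 : 0 ≤ μG * G u * (G u - XG) := by positivity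
        have h2 : 0 ≤ γTG * T u * G u := by positivity
        linarith)
      t ht
    have h' : G t - XG ≤ 0 := this
    linarith
  have hbmem : b ∈ Icc (0:ℝ) b := ⟨hb, le_refl b⟩
  exact ⟨⟨hGnn b hbmem, hGub b hbmem⟩, ⟨hTnn b hbmem, hTub b hbmem⟩⟩
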